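/- Suppose Hypothesis (H1) holds. Then for every bounded Borel measurable function f : M → ℝ, the function 𝒫f defined by 𝒫f(x) = ∫_M f(y) P(x,dy) is continuous on M; the operator 𝒫 is positive (f ≥ 0 implies 𝒫f ≥ 0); and the restriction of 𝒫 to (C(M),‖·‖_∞) is a compact linear operator. -/

import Mathlib

open MeasureTheory Filter Topology BoundedContinuousFunction

noncomputable section

variable {M : Type*}

/-- Hypothesis (H1) of the paper: `P` is a measurable sub-Markovian kernel, each `P x` is
absolutely continuous w.r.t. `ρ`, and `x ↦ dP(x,·)/dρ` is continuous from `M` into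
`L¹(ρ)`. -/
structure HypH1 [MetricSpace M] [MeasurableSpace M] (P : M → Measure M) (ρ : Measure M) : Prop where
  meas : Measurable P
  subMarkov : ∀ x, P x Set.univ ≤ 1
  absCont : ∀ x, P x ≪ ρ
  densityCont : ∀ ε : ℝ, 0 < ε → ∃ δ : ℝ, 0 < δ ∧ ∀ x z : M, dist x z < δ →
      (∫⁻ y, ((P x).rnDeriv ρ y - (P z).rnDeriv ρ y)
        + ((P z).rnDeriv ρ y - (P x).rnDeriv ρ y) ∂ρ) < ENNReal.ofReal ε

section Aux

variable [MetricSpace M] [MeasurableSpace M] [BorelSpace M]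
  (ρ : Measure M) [IsFiniteMeasure ρ] (P : M → Measure M)

/-- The key quantitative estimate: the difference of the integrals of a bounded measurable
function against `P x` and `P z` is controlled by the `L¹` distance of the densities. -/
lemma koopman_key_estimate (hH1 : HypH1 P ρ) {f : M → ℝ} (hf : Measurable f) {C : ℝ}
    (hC : ∀ y, |f y| ≤ C) (x z : M) :
    |(∫ y, f y ∂(P x)) - ∫ y, f y ∂(P z)| ≤ C *
      (∫⁻ y, ((P x).rnDeriv ρ y - (P z).rnDeriv ρ y)
        + ((P z).rnDeriv ρ y - (P x).rnDeriv ρ y) ∂ρ).toReal := by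
  haveI hfinx : IsFiniteMeasure (P x) := ⟨(hH1.subMarkov x).trans_lt ENNReal.one_lt_top⟩
  haveI hfinz : IsFiniteMeasure (P z) := ⟨(hH1.subMarkov z).trans_lt ENNReal.one_lt_top⟩
  have hC0 : 0 ≤ C := (abs_nonneg _).trans (hC x)
  set gx := (P x).rnDeriv ρ with hgx
  set gz := (P z).rnDeriv ρ with hgz
  have hmx : Measurable gx := Measure.measurable_rnDeriv _ _
  have hmz : Measurable gz := Measure.measurable_rnDeriv _ _
  have hix : Integrable (fun y => (gx y).toReal) ρ := Measure.integrable_toReal_rnDeriv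
  have hiz : Integrable (fun y => (gz y).toReal) ρ := Measure.integrable_toReal_rnDeriv
  have hbdd : ∃ B, ∀ y, ‖f y‖ ≤ B := ⟨C, fun y => by simpa using hC y⟩
  have hix' : Integrable (fun y => (gx y).toReal • f y) ρ := by
    simp_rw [smul_eq_mul, mul_comm]
    exact hix.bdd_mul hf.aestronglyMeasurable (ae_of_all _ hbdd.choose_spec)
  have hiz' : Integrable (fun y => (gz y).toReal • f y) ρ := by
    simp_rw [smul_eq_mul, mul_comm]
    exact hiz.bdd_mul hf.aestronglyMeasurable (ae_of_all _ hbdd.choose_spec)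
  have h1 : ∫ y, f y ∂(P x) = ∫ y, (gx y).toReal • f y ∂ρ :=
    (MeasureTheory.integral_rnDeriv_smul (hH1.absCont x)).symm
  have h2 : ∫ y, f y ∂(P z) = ∫ y, (gz y).toReal • f y ∂ρ :=
    (MeasureTheory.integral_rnDeriv_smul (hH1.absCont z)).symm
  have hltx : ∀ᵐ y ∂ρ, gx y < ⊤ := Measure.rnDeriv_lt_top _ _
  have hltz : ∀ᵐ y ∂ρ, gz y < ⊤ := Measure.rnDeriv_lt_top _ _
  have hintΔ : Integrable (fun y => |(gx y).toReal - (gz y).toReal|) ρ := (hix.sub hiz).abs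
  have habs : ∀ᵐ y ∂ρ, |(gx y).toReal - (gz y).toReal|
      = ((gx y - gz y) + (gz y - gx y)).toReal := by
    filter_upwards [hltx, hltz] with y ha hb
    rcases le_total (gx y) (gz y) with h | h
    · rw [tsub_eq_zero_of_le h, zero_add, ENNReal.toReal_sub_of_le h hb.ne,
        abs_of_nonpos (by simp [sub_nonpos, ENNReal.toReal_le_toReal ha.ne hb.ne, h]), neg_sub]
    · rw [tsub_eq_zero_of_le h, add_zero, ENNReal.toReal_sub_of_le h ha.ne,
        abs_of_nonneg (by simp [sub_nonneg, ENNReal.toReal_le_toReal hb.ne ha.ne, h])]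
  have hL : ∫ y, |(gx y).toReal - (gz y).toReal| ∂ρ
      = (∫⁻ y, (gx y - gz y) + (gz y - gx y) ∂ρ).toReal := by
    rw [integral_congr_ae habs]
    exact integral_toReal ((hmx.sub hmz).add (hmz.sub hmx)).aemeasurable
      (by filter_upwards [hltx, hltz] with y ha hb
          exact ENNReal.add_lt_top.2 ⟨lt_of_le_of_lt tsub_le_self ha,
            lt_of_le_of_lt tsub_le_self hb⟩)
  rw [h1, h2, ← integral_sub hix' hiz']
  calc |∫ y, (gx y).toReal • f y - (gz y).toReal • f y ∂ρ|
      ≤ ∫ y, |((gx y).toReal - (gz y).toReal) * f y| ∂ρ := by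
        simpa [Real.norm_eq_abs, smul_eq_mul, sub_mul] using
          norm_integral_le_integral_norm (fun y => (gx y).toReal • f y - (gz y).toReal • f y)
            (μ := ρ)
    _ ≤ ∫ y, C * |(gx y).toReal - (gz y).toReal| ∂ρ := by
        refine integral_mono ?_ (hintΔ.const_mul C) fun y => ?_
        · simpa [smul_eq_mul, sub_mul] using (hix'.sub hiz').abs
        · rw [abs_mul, mul_comm]
          exact mul_le_mul_of_nonneg_right ((hC y)) (abs_nonneg _)
    _ = C * ∫ y, |(gx y).toReal - (gz y).toReal| ∂ρ := integral_const_mul _ _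
    _ = C * (∫⁻ y, (gx y - gz y) + (gz y - gx y) ∂ρ).toReal := by rw [hL]

/-- Continuity of the Koopman operator applied to a bounded measurable function. -/
lemma koopman_continuous (hH1 : HypH1 P ρ) {f : M → ℝ} (hf : Measurable f) {C : ℝ}
    (hC : ∀ y, |f y| ≤ C) : Continuous fun x => ∫ y, f y ∂(P x) := by
  rw [Metric.continuous_iff]
  intro b ε hε
  have hC0 : 0 ≤ C := (abs_nonneg _).trans (hC b)
  obtain ⟨δ, hδ, h⟩ := hH1.densityCont (ε / (C + 1)) (by positivity)
  refine ⟨δ, hδ, fun a ha => ?_⟩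
  have hlt := h a b ha
  have htr : (∫⁻ y, ((P a).rnDeriv ρ y - (P b).rnDeriv ρ y)
      + ((P b).rnDeriv ρ y - (P a).rnDeriv ρ y) ∂ρ).toReal < ε / (C + 1) :=
    (ENNReal.lt_ofReal_iff_toReal_lt (ne_top_of_lt hlt)).mp hlt
  have hkey := koopman_key_estimate ρ P hH1 hf hC a b
  rw [Real.dist_eq]
  have h2 : (C + 1) * (ε / (C + 1)) = ε := by field_simp
  calc |(∫ y, f y ∂(P a)) - ∫ y, f y ∂(P b)|
      ≤ C * (∫⁻ y, ((P a).rnDeriv ρ y - (P b).rnDeriv ρ y)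
        + ((P b).rnDeriv ρ y - (P a).rnDeriv ρ y) ∂ρ).toReal := hkey
    _ ≤ C * (ε / (C + 1)) := by
        refine mul_le_mul_of_nonneg_left htr.le hC0
    _ < (C + 1) * (ε / (C + 1)) := by
        refine mul_lt_mul_of_pos_right (by linarith) (by positivity)
    _ = ε := h2

end Aux

/-- **Proposition (regularity of the Koopman operator).** Under Hypothesis (H1): for every
bounded Borel `f : M → ℝ`, the function `𝒫f : x ↦ ∫ f dP(x,·)` is continuous; `𝒫` is
positive; and the restriction of `𝒫` to `(C(M), ‖·‖_∞)` is a compact linear operator. -/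
theorem koopman_regularity_of_hypH1
    [MetricSpace M] [CompactSpace M] [MeasurableSpace M] [BorelSpace M]
    (ρ : Measure M) [IsFiniteMeasure ρ] (P : M → Measure M) (hH1 : HypH1 P ρ) :
    (∀ f : M → ℝ, Measurable f → (∃ C : ℝ, ∀ y, |f y| ≤ C) →
      Continuous fun x => ∫ y, f y ∂(P x)) ∧
    (∀ f : M → ℝ, Measurable f → (∃ C : ℝ, ∀ y, |f y| ≤ C) → (∀ y, 0 ≤ f y) →
      ∀ x, 0 ≤ ∫ y, f y ∂(P x)) ∧
    ∃ T : C(M, ℝ) →L[ℝ] C(M, ℝ),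
      (∀ (f : C(M, ℝ)) (x : M), T f x = ∫ y, f y ∂(P x)) ∧ IsCompactOperator ⇑T := by
  haveI hfin : ∀ x, IsFiniteMeasure (P x) :=
    fun x => ⟨(hH1.subMarkov x).trans_lt ENNReal.one_lt_top⟩
  have hint : ∀ (f : C(M, ℝ)) (x : M), Integrable f (P x) := fun f x =>
    (integrable_const ‖f‖).mono' (map_continuous f).measurable.aestronglyMeasurable
      (ae_of_all _ fun y => by simpa using f.norm_coe_le_norm y)
  refine ⟨fun f hf ⟨C, hC⟩ => koopman_continuous ρ P hH1 hf hC,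
    fun f _ _ hpos x => integral_nonneg hpos, ?_⟩
  -- the linear map
  set T0 : C(M, ℝ) →ₗ[ℝ] C(M, ℝ) :=
    { toFun := fun f =>
        ⟨fun x => ∫ y, f y ∂(P x),
          koopman_continuous ρ P hH1 (map_continuous f).measurable
            (C := ‖f‖) fun y => by simpa using f.norm_coe_le_norm y⟩
      map_add' := fun f g => ContinuousMap.ext fun x => by
        simp only [ContinuousMap.coe_add, Pi.add_apply, ContinuousMap.coe_mk]
        exact integral_add (hint f x) (hint g x)
      map_smul' := fun c f => ContinuousMap.ext fun x => by
        simp only [ContinuousMap.coe_smul, Pi.smul_apply, ContinuousMap.coe_mk,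
          RingHom.id_apply]
        exact integral_smul c _ } with hT0
  have hbound : ∀ f : C(M, ℝ), ‖T0 f‖ ≤ 1 * ‖f‖ := by
    intro f
    rw [one_mul]
    refine (ContinuousMap.norm_le _ (norm_nonneg f)).mpr fun x => ?_
    calc ‖(T0 f) x‖ = ‖∫ y, f y ∂(P x)‖ := rfl
      _ ≤ ∫ y, ‖f y‖ ∂(P x) := norm_integral_le_integral_norm _
      _ ≤ ∫ _, ‖f‖ ∂(P x) :=
          integral_mono (hint f x).norm (integrable_const _) fun y => f.norm_coe_le_norm y
      _ = ((P x) Set.univ).toReal * ‖f‖ := by rw [integral_const]; rfl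
      _ ≤ 1 * ‖f‖ := by
          refine mul_le_mul_of_nonneg_right ?_ (norm_nonneg f)
          simpa using ENNReal.toReal_mono ENNReal.one_ne_top (hH1.subMarkov x)
      _ = ‖f‖ := one_mul _
  set T : C(M, ℝ) →L[ℝ] C(M, ℝ) := T0.mkContinuous 1 hbound with hT
  refine ⟨T, fun f x => rfl, ?_⟩
  -- compactness via Arzelà–Ascoli
  set B := Metric.closedBall (0 : C(M, ℝ)) 1 with hB
  set e := ContinuousMap.linearIsometryBoundedOfCompact M ℝ ℝ with he
  set A : Set (M →ᵇ ℝ) := ⇑e '' (⇑T '' B) with hA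
  have hnorm1 : ∀ f ∈ B, ‖f‖ ≤ 1 := fun f hf => by
    rwa [hB, Metric.mem_closedBall, dist_zero_right] at hf
  have hTf1 : ∀ f ∈ B, ‖T f‖ ≤ 1 := fun f hf =>
    (hbound f).trans (by simpa using hnorm1 f hf)
  have in_s : ∀ (g : M →ᵇ ℝ) (x : M), g ∈ A → g x ∈ Metric.closedBall (0 : ℝ) 1 := by
    rintro g x ⟨h, ⟨f, hf, rfl⟩, rfl⟩
    rw [Metric.mem_closedBall, dist_zero_right]
    calc ‖(e (T f)) x‖ = ‖(T f) x‖ := by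
          rw [ContinuousMap.linearIsometryBoundedOfCompact_apply_apply]
      _ ≤ ‖T f‖ := (T f).norm_coe_le_norm x
      _ ≤ 1 := hTf1 f hf
  have equi : Equicontinuous ((↑) : A → M → ℝ) := by
    intro x₀
    rw [Metric.equicontinuousAt_iff]
    intro ε hε
    obtain ⟨δ, hδ, h⟩ := hH1.densityCont (ε / 2) (half_pos hε)
    refine ⟨δ, hδ, fun x hx i => ?_⟩
    obtain ⟨g, ⟨f, hfB, rfl⟩, hgi⟩ := i.2
    have hC : ∀ y, |f y| ≤ (1 : ℝ) := fun y =>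
      (by simpa using f.norm_coe_le_norm y : |f y| ≤ ‖f‖).trans (hnorm1 f hfB)
    have hlt := h x₀ x (by rw [dist_comm] at hx; exact hx)
    have htr : (∫⁻ y, ((P x₀).rnDeriv ρ y - (P x).rnDeriv ρ y)
        + ((P x).rnDeriv ρ y - (P x₀).rnDeriv ρ y) ∂ρ).toReal < ε / 2 :=
      (ENNReal.lt_ofReal_iff_toReal_lt (ne_top_of_lt hlt)).mp hlt
    have hkey := koopman_key_estimate ρ P hH1 (map_continuous f).measurable hC x₀ x
    have hcoe : ((i : M →ᵇ ℝ) : M → ℝ) = ((e (T f) : M →ᵇ ℝ) : M → ℝ) := by rw [hgi]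
    rw [hcoe]
    have happ : ∀ w : M, (e (T f)) w = ∫ y, f y ∂(P w) := fun w => by
      rw [ContinuousMap.linearIsometryBoundedOfCompact_apply_apply]; rfl
    rw [happ x₀, happ x, Real.dist_eq]
    calc |(∫ y, f y ∂(P x₀)) - ∫ y, f y ∂(P x)|
        ≤ 1 * (∫⁻ y, ((P x₀).rnDeriv ρ y - (P x).rnDeriv ρ y)
          + ((P x).rnDeriv ρ y - (P x₀).rnDeriv ρ y) ∂ρ).toReal := hkey
      _ < ε := by rw [one_mul]; linarith
  have hcompA : IsCompact (closure A) :=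
    BoundedContinuousFunction.arzela_ascoli (Metric.closedBall (0 : ℝ) 1)
      (isCompact_closedBall _ _) A in_s equi
  have h2 : ⇑(e.symm) '' A = ⇑T '' B := by
    rw [hA, Set.image_image]
    simp [LinearIsometryEquiv.symm_apply_apply]
  have hK : IsCompact (closure (⇑T '' B)) := by
    have h3 : ⇑(e.symm) '' closure A = closure (⇑(e.symm) '' A) := by
      rw [← LinearIsometryEquiv.coe_toHomeomorph]
      exact (e.symm.toHomeomorph.image_closure A)
    have h4 := hcompA.image e.symm.continuous
    rwa [h3, h2] at h4
  exact ⟨closure (⇑T '' B), hK,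
    mem_of_superset (Metric.closedBall_mem_nhds 0 one_pos)
      fun f hf => subset_closure (Set.mem_image_of_mem _ hf)⟩
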